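/- Let d ≥ 3 and M ≥ 4 be integers. Then the average effective resistance of the d-dimensional toroidal grid with all side lengths equal to M satisfies R_ave(T_{M^d}) ≥ 1/(4d). -/
import Mathlib

open Real Finset

/-- Average effective resistance of the `d`-dimensional toroidal grid `T_{M^d}`
with all side lengths equal to `M`. -/
noncomputable def RaveTorus (d M : ℕ) : ℝ :=
  (1 / (M : ℝ) ^ d) * ∑ h : Fin d → Fin M,
    if ∀ i, (h i : ℕ) = 0 then 0
    else 1 / (2 * d - 2 * ∑ i, Real.cos (2 * Real.pi * (h i : ℕ) / M))

lemma cos_aux {M k : ℕ} (hM : 4 ≤ M) (hk1 : 1 ≤ k) (hk2 : k < M) :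
    Real.cos (2 * Real.pi * (k : ℝ) / M) < 1 := by
  have hMpos : (0:ℝ) < M := by positivity
  have hx1 : (0:ℝ) < 2 * Real.pi * (k : ℝ) / M := by
    have : (0:ℝ) < (k:ℝ) := by exact_mod_cast hk1
    positivity
  have hx2 : 2 * Real.pi * (k : ℝ) / M < 2 * Real.pi := by
    rw [div_lt_iff₀ hMpos]
    have hk : (k : ℝ) < M := by exact_mod_cast hk2
    nlinarith [Real.pi_pos]
  have h := Real.cos_eq_one_iff_of_lt_of_lt (x := 2 * Real.pi * (k : ℝ) / M)
    (by linarith) hx2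
  rcases lt_or_eq_of_le (Real.cos_le_one (2 * Real.pi * (k : ℝ) / M)) with hlt | heq
  · exact hlt
  · exact absurd (h.1 heq) (by linarith)

lemma denom_pos {d M : ℕ} (hM : 4 ≤ M) (h : Fin d → Fin M)
    (hne : ¬ ∀ i, (h i : ℕ) = 0) :
    0 < 2 * (d:ℝ) - 2 * ∑ i, Real.cos (2 * Real.pi * (h i : ℕ) / M) := by
  push_neg at hne
  obtain ⟨i0, hi0⟩ := hne
  have hsum : ∑ i, Real.cos (2 * Real.pi * ((h i : ℕ) : ℝ) / M) < ∑ _i : Fin d, (1:ℝ) := by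
    apply Finset.sum_lt_sum
    · intro i _; exact Real.cos_le_one _
    · refine ⟨i0, Finset.mem_univ _, ?_⟩
      exact cos_aux hM (Nat.one_le_iff_ne_zero.2 hi0) (h i0).2
  simp only [Finset.sum_const, Finset.card_univ, Fintype.card_fin, nsmul_eq_mul, mul_one] at hsum
  linarith

lemma term_ge {d M : ℕ} (hd : 3 ≤ d) (hM : 4 ≤ M) (h : Fin d → Fin M)
    (hne : ¬ ∀ i, (h i : ℕ) = 0) :
    1 / (4 * (d:ℝ)) ≤ 1 / (2 * (d:ℝ) - 2 * ∑ i, Real.cos (2 * Real.pi * (h i : ℕ) / M)) := by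
  have hpos := denom_pos hM h hne
  have hle : 2 * (d:ℝ) - 2 * ∑ i, Real.cos (2 * Real.pi * (h i : ℕ) / M) ≤ 4 * d := by
    have : (- (d:ℝ)) ≤ ∑ i, Real.cos (2 * Real.pi * ((h i : ℕ):ℝ) / M) := by
      have : ∑ _i : Fin d, (-1:ℝ) ≤ ∑ i, Real.cos (2 * Real.pi * ((h i : ℕ):ℝ) / M) :=
        Finset.sum_le_sum (fun i _ => Real.neg_one_le_cos _)
      simpa using this
    linarith
  exact one_div_le_one_div_of_le hpos hle

theorem torusd_lower (d M : ℕ) (hd : 3 ≤ d) (hM : 4 ≤ M) :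
    RaveTorus d M ≥ 1 / (4 * (d : ℝ)) := by
  have hdpos : (0:ℝ) < d := by positivity
  have hMpos : (0:ℝ) < M := by positivity
  have hdne : d ≠ 0 := by omega
  have hMne : M ≠ 0 := by omega
  -- special point h0
  set i0 : Fin d := ⟨0, by omega⟩ with hi0def
  set z : Fin d → Fin M := fun _ => ⟨0, by omega⟩ with hzdef
  set h0 : Fin d → Fin M := fun i => if i = i0 then ⟨1, by omega⟩ else ⟨0, by omega⟩ with hh0def
  have hh0ne : ¬ ∀ i, (h0 i : ℕ) = 0 := by
    intro hall
    have := hall i0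
    simp [hh0def] at this
  have hh0z : h0 ≠ z := by
    intro he
    apply hh0ne
    intro i
    simp [he, hzdef]
  have hzall : ∀ i, (z i : ℕ) = 0 := fun i => rfl
  -- value at h0
  have hsum0 : ∑ i, Real.cos (2 * Real.pi * ((h0 i : ℕ):ℝ) / M)
      = Real.cos (2 * Real.pi / M) + (d - 1 : ℝ) := by
    rw [← Finset.add_sum_erase _ _ (Finset.mem_univ i0)]
    have h1 : ((h0 i0 : ℕ):ℝ) = 1 := by simp [hh0def]
    have h2 : ∀ i ∈ Finset.univ.erase i0,
        Real.cos (2 * Real.pi * ((h0 i : ℕ):ℝ) / M) = 1 := by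
      intro i hi
      have : i ≠ i0 := (Finset.mem_erase.1 hi).1
      simp [hh0def, this]
    rw [Finset.sum_congr rfl h2, h1]
    simp [Finset.card_erase_of_mem, Nat.cast_sub (by omega : 1 ≤ d)]
  have hterm0 : (1:ℝ)/2 ≤ 1 / (2 * (d:ℝ) - 2 * ∑ i, Real.cos (2 * Real.pi * ((h0 i : ℕ):ℝ) / M)) := by
    rw [hsum0]
    have hcos1 : Real.cos (2 * Real.pi / M) < 1 := by
      have := cos_aux (M := M) (k := 1) hM le_rfl (by omega)
      simpa using this
    have hcos0 : 0 ≤ Real.cos (2 * Real.pi / M) := by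
      apply Real.cos_nonneg_of_mem_Icc
      constructor
      · have h1 : (0:ℝ) ≤ 2 * Real.pi / M := by positivity
        have := Real.pi_pos
        linarith
      · rw [div_le_iff₀ hMpos]
        have : (4:ℝ) ≤ M := by exact_mod_cast hM
        nlinarith [Real.pi_pos]
    have hden : 2 * (d:ℝ) - 2 * (Real.cos (2 * Real.pi / M) + (d - 1)) = 2 - 2 * Real.cos (2 * Real.pi / M) := by ring
    rw [hden]
    apply one_div_le_one_div_of_le <;> linarith
  -- lower bound on the big sum
  set F : (Fin d → Fin M) → ℝ := fun h =>
    if ∀ i, (h i : ℕ) = 0 then 0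
    else 1 / (2 * (d:ℝ) - 2 * ∑ i, Real.cos (2 * Real.pi * ((h i : ℕ):ℝ) / M)) with hF
  have hzmem : z ∈ Finset.univ.erase h0 := Finset.mem_erase.2 ⟨Ne.symm hh0z, Finset.mem_univ _⟩
  have hcard : ((Finset.univ.erase h0).erase z).card = M ^ d - 2 := by
    rw [Finset.card_erase_of_mem hzmem, Finset.card_erase_of_mem (Finset.mem_univ _)]
    simp only [Finset.card_univ, Fintype.card_fun, Fintype.card_fin]
    omega
  have hsumF : (M:ℝ)^d * (1 / (4 * (d:ℝ))) ≤ ∑ h : Fin d → Fin M, F h := by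
    rw [← Finset.add_sum_erase _ _ (Finset.mem_univ h0),
        ← Finset.add_sum_erase _ _ hzmem]
    have hFz : F z = 0 := by simp [hF, hzall]
    have hFh0 : (1:ℝ)/2 ≤ F h0 := by
      rw [hF]; simp only [hh0ne, if_false]; exact hterm0
    have hrest : ((M:ℝ)^d - 2) * (1 / (4 * (d:ℝ))) ≤ ∑ h ∈ (Finset.univ.erase h0).erase z, F h := by
      have : ∀ h ∈ (Finset.univ.erase h0).erase z, 1 / (4 * (d:ℝ)) ≤ F h := by
        intro h hh
        have hhz : h ≠ z := (Finset.mem_erase.1 hh).1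
        have hne : ¬ ∀ i, (h i : ℕ) = 0 := by
          intro hall
          apply hhz
          funext i
          exact Fin.ext (by simpa using hall i)
        rw [hF]; simp only [hne, if_false]
        exact term_ge hd hM h hne
      calc ((M:ℝ)^d - 2) * (1 / (4 * (d:ℝ)))
          = (((Finset.univ.erase h0).erase z).card : ℝ) * (1 / (4 * (d:ℝ))) := by
            rw [hcard]
            have h2 : 2 ≤ M ^ d := by
              calc 2 ≤ 4 := by norm_num
              _ ≤ M := hM
              _ ≤ M ^ d := Nat.le_self_pow hdne M
            rw [Nat.cast_sub h2]
            push_cast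
            ring
        _ ≤ ∑ h ∈ (Finset.univ.erase h0).erase z, F h := by
            have := Finset.card_nsmul_le_sum ((Finset.univ.erase h0).erase z) F (1/(4*(d:ℝ))) this
            simpa [nsmul_eq_mul] using this
    have hhalf : (2:ℝ) * (1 / (4 * (d:ℝ))) ≤ 1/2 := by
      rw [mul_one_div, div_le_div_iff₀ (by positivity) (by norm_num)]
      have : (3:ℝ) ≤ d := by exact_mod_cast hd
      nlinarith
    rw [hFz]
    nlinarith [hFh0, hrest, hhalf]
  -- finish
  rw [RaveTorus, ge_iff_le]
  have hMdpos : (0:ℝ) < (M:ℝ)^d := by positivity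
  calc 1 / (4 * (d:ℝ)) = (1 / (M:ℝ)^d) * ((M:ℝ)^d * (1 / (4 * (d:ℝ)))) := by
        field_simp
    _ ≤ (1 / (M:ℝ)^d) * ∑ h : Fin d → Fin M, F h := by
        apply mul_le_mul_of_nonneg_left hsumF (by positivity)
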